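/- (Existence lemma) Let Σ ⊆ {T, B, 4, D}, let φ ∈ L_{h,n}, and let ψ be any modal formula. If ψ∧◇φ is KΣ-consistent, then there exists α ∈ C_{h,n} such that ψ∧◇α is KΣ-consistent and ⊢_{KΣ} α→φ. -/

import Mathlib

namespace ModalSOA

/-- Modal formulas: propositional variables, propositional constants, ⊥, →, □. -/
inductive Formula : Type
  | var : ℕ → Formula
  | const : ℕ → Formula
  | bot : Formula
  | imp : Formula → Formula → Formula
  | box : Formula → Formula
deriving DecidableEq

namespace Formula

/-- ¬φ := φ → ⊥ -/
def neg (φ : Formula) : Formula := φ.imp bot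

/-- ⊤ := ¬⊥ -/
def top : Formula := bot.neg

/-- ◇φ := ¬□¬φ -/
def dia (φ : Formula) : Formula := φ.neg.box.neg

/-- φ ∧ ψ := ¬(φ → ¬ψ) -/
def and (φ ψ : Formula) : Formula := (φ.imp ψ.neg).neg

/-- φ ∨ ψ := ¬φ → ψ -/
def or (φ ψ : Formula) : Formula := φ.neg.imp ψ

/-- Uniform substitution: substitute formulas for propositional variables,
    leaving propositional constants fixed. -/
def subst (σ : ℕ → Formula) : Formula → Formula
  | var n => σ n
  | const n => const n
  | bot => bot
  | imp φ ψ => imp (φ.subst σ) (ψ.subst σ)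
  | box φ => box (φ.subst σ)

end Formula

open Formula

/-- The propositional variable p. -/
def pv : Formula := .var 0
/-- The propositional variable q. -/
def qv : Formula := .var 1
/-- The propositional variable r. -/
def rv : Formula := .var 2

/-- The seven extra modal axioms considered: T, B, 4, 5, D, .2, L. -/
inductive ModalAxiom : Type
  | T | B | four | five | D | dot2 | L
deriving DecidableEq

/-- The modal formula corresponding to each axiom name. -/
def ModalAxiom.fml : ModalAxiom → Formula
  | .T => pv.box.imp pv                       -- □p → p
  | .B => pv.imp pv.dia.box                   -- p → □◇p
  | .four => pv.box.imp pv.box.box            -- □p → □□p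
  | .five => pv.dia.imp pv.dia.box            -- ◇p → □◇p
  | .D => pv.box.imp pv.dia                   -- □p → ◇p
  | .dot2 => pv.box.dia.imp pv.dia.box        -- ◇□p → □◇p
  | .L => (pv.box.imp pv).box.imp pv.box      -- □(□p→p) → □p

/-- Hilbert-style provability for the normal modal logic with extra axioms `Ax`:
classical propositional axioms, K, members of `Ax`, modus ponens, necessitation,
and uniform substitution. -/
inductive Prv (Ax : Set Formula) : Formula → Prop
  | ax1 : Prv Ax (pv.imp (qv.imp pv))
  | ax2 : Prv Ax ((pv.imp (qv.imp rv)).imp ((pv.imp qv).imp (pv.imp rv)))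
  | ax3 : Prv Ax ((pv.neg.imp qv.neg).imp (qv.imp pv))
  | axK : Prv Ax ((pv.imp qv).box.imp (pv.box.imp qv.box))
  | extra {φ} : φ ∈ Ax → Prv Ax φ
  | mp {φ ψ} : Prv Ax (φ.imp ψ) → Prv Ax φ → Prv Ax ψ
  | nec {φ} : Prv Ax φ → Prv Ax φ.box
  | subst {φ} (σ : ℕ → Formula) : Prv Ax φ → Prv Ax (φ.subst σ)

/-- The axiom set of the logic KΣ. -/
def KAxioms (Sig : Set ModalAxiom) : Set Formula := ModalAxiom.fml '' Sig

/-- The axiom set of GL = K{L}. -/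
def GLAx : Set Formula := KAxioms {ModalAxiom.L}

/-- Conjunction of a list of formulas (empty conjunction is ⊤). -/
def listConj : List Formula → Formula
  | [] => top
  | [φ] => φ
  | φ :: ψ :: l => φ.and (listConj (ψ :: l))

/-- Disjunction of a list of formulas (empty disjunction is ⊥). -/
def listDisj : List Formula → Formula
  | [] => bot
  | [φ] => φ
  | φ :: ψ :: l => φ.or (listDisj (ψ :: l))

/-- Pbl(Γ, φ): there are ψ₁,…,ψₙ ∈ Γ with ⊢ (ψ₁∧…∧ψₙ) → φ. -/
def Pbl (Ax : Set Formula) (Γ : Set Formula) (φ : Formula) : Prop :=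
  ∃ l : List Formula, (∀ ψ ∈ l, ψ ∈ Γ) ∧ Prv Ax ((listConj l).imp φ)

/-- A formula φ is consistent if ⊬ φ → ⊥. -/
def FmlConsistent (Ax : Set Formula) (φ : Formula) : Prop := ¬ Prv Ax (φ.imp bot)

/-- A set Γ is consistent if ¬Pbl(Γ, ⊥). -/
def SetConsistent (Ax : Set Formula) (Γ : Set Formula) : Prop := ¬ Pbl Ax Γ bot

/-- Γ is maximally consistent: consistent, closed under deduction, and for
every φ, φ ∈ Γ or ¬φ ∈ Γ. -/
def MaxConsistent (Ax : Set Formula) (Γ : Set Formula) : Prop :=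
  SetConsistent Ax Γ ∧ (∀ φ, Pbl Ax Γ φ → φ ∈ Γ) ∧ (∀ φ, φ ∈ Γ ∨ φ.neg ∈ Γ)

/-- Euclidean relation. -/
def Euclidean {W : Type*} (R : W → W → Prop) : Prop := ∀ ⦃x y z⦄, R x y → R x z → R y z

/-- Serial relation. -/
def Serial {W : Type*} (R : W → W → Prop) : Prop := ∀ x, ∃ y, R x y

/-- Directed relation. -/
def Directed {W : Type*} (R : W → W → Prop) : Prop :=
  ∀ ⦃x y z⦄, R x y → R x z → ∃ s, R y s ∧ R z s

/-- No infinite ascending R-sequence. -/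
def NoInfiniteAscent {W : Type*} (R : W → W → Prop) : Prop :=
  ¬ ∃ f : ℕ → W, ∀ n, R (f n) (f (n + 1))

/-- A frame (with relation R) is appropriate to a given modal axiom. -/
def AppropriateTo {W : Type*} (R : W → W → Prop) : ModalAxiom → Prop
  | .T => Reflexive R
  | .B => Symmetric R
  | .four => Transitive R
  | .five => Euclidean R
  | .D => Serial R
  | .dot2 => Directed R
  | .L => Transitive R ∧ NoInfiniteAscent R

/-- A frame is appropriate to Σ if it is appropriate to each member of Σ. -/
def Appropriate {W : Type*} (R : W → W → Prop) (Sig : Set ModalAxiom) : Prop :=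
  ∀ a ∈ Sig, AppropriateTo R a

/-- A valuation on a frame: truth values for all formulas, respecting the
Kripke clauses for ⊥, →, □. -/
structure Valuation {W : Type*} (R : W → W → Prop) where
  val : W → Formula → Bool
  val_bot : ∀ w, val w Formula.bot = false
  val_imp : ∀ w φ ψ, val w (φ.imp ψ) = (!(val w φ) || val w ψ)
  val_box : ∀ w φ, val w φ.box = true ↔ ∀ v, R w v → val v φ = true

/-- F ⊩ φ : every valuation on the frame makes φ true at every world. -/
def FrameForces {W : Type*} (R : W → W → Prop) (φ : Formula) : Prop :=
  ∀ V : Valuation R, ∀ w : W, V.val w φ = true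

/-- Height of a formula. -/
def ht : Formula → ℕ
  | .imp φ ψ => max (ht φ) (ht ψ)
  | .box φ => 1 + ht φ
  | _ => 0

/-- Order of a formula, with respect to the fixed enumeration `atom` of
atomic formulas. -/
def ord : Formula → ℕ
  | .bot => 0
  | .var k => 2 * k + 1
  | .const k => 2 * k + 2
  | .imp φ ψ => max (ord φ) (ord ψ)
  | .box φ => ord φ

/-- A fixed enumeration p₀, p₁, … of the atomic formulas (⊥, variables and
constants), with `ord (atom n) = n`. -/
def atom : ℕ → Formula
  | 0 => .bot
  | n + 1 => if n % 2 = 0 then .var (n / 2) else .const (n / 2)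

/-- φ ∈ L_{h,n}. -/
def InL (h n : ℕ) (φ : Formula) : Prop := ht φ ≤ h ∧ ord φ ≤ n

/-- T̂ for T ⊆ {p₀,…,pₙ}: the conjunction of the atoms in T and the negations
of the remaining atoms among p₀,…,pₙ. -/
def hatT (n : ℕ) (T : List ℕ) : Formula :=
  listConj ((List.range (n + 1)).map (fun i => if i ∈ T then atom i else (atom i).neg))

/-- The canonical formula α_{S,T} = (∧_{ψ∈S} ◇ψ) ∧ □(∨S) ∧ T̂. -/
def canonAlpha (n : ℕ) (S : List Formula) (T : List ℕ) : Formula :=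
  (listConj (S.map dia)).and (((listDisj S).box).and (hatT n T))

/-- The canonical formulas C_{h,n} (as a finite list). -/
def C : ℕ → ℕ → List Formula
  | 0, n => (List.range (n + 1)).sublists.map (hatT n)
  | h + 1, n => (C h n).sublists.flatMap
      (fun S => (List.range (n + 1)).sublists.map (fun T => canonAlpha n S T))

/-- ⊕X := ∨_{α∈X}(α ∧ ∧_{β∈X\{α}} ¬β). -/
def bigOplus (X : List Formula) : Formula :=
  listDisj (X.map (fun α => α.and (listConj ((X.filter (· ≠ α)).map neg))))

/-- The set of subformulas of a formula. -/
def sub : Formula → Finset Formula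
  | .imp φ ψ => insert (Formula.imp φ ψ) (sub φ ∪ sub ψ)
  | .box φ => insert φ.box (sub φ)
  | a => {a}

/-- (W, R, V) is a weak Kripke model of φ: W nonempty and V satisfies the
valuation clauses for ⊥, →, □ on the subformulas of φ. -/
structure IsWeakKripkeModel (φ : Formula) {W : Type*} (R : W → W → Prop)
    (V : W → Formula → Bool) : Prop where
  nonempty : Nonempty W
  val_bot : ∀ w, Formula.bot ∈ sub φ → V w Formula.bot = false
  val_imp : ∀ w ψ θ, ψ.imp θ ∈ sub φ → V w (ψ.imp θ) = (!(V w ψ) || V w θ)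
  val_box : ∀ w ψ, ψ.box ∈ sub φ → (V w ψ.box = true ↔ ∀ v, R w v → V v ψ = true)

/-- W̃ : the KΣ-consistent α ∈ C_{h+1,n} with ⊢ α → φ. -/
def tildeW (Ax : Set Formula) (φ : Formula) (h n : ℕ) : Set Formula :=
  {α | α ∈ C (h + 1) n ∧ FmlConsistent Ax α ∧ Prv Ax (α.imp φ)}

/-- α →c β iff α ∧ ◇β is consistent. -/
def relC (Ax : Set Formula) (α β : Formula) : Prop := FmlConsistent Ax (α.and β.dia)

/-- Ṽ(α, ψ) = 1 iff ⊢ α → ψ. -/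
noncomputable def tildeV (Ax : Set Formula) (α ψ : Formula) : Bool :=
  @decide _ (Classical.propDecidable (Prv Ax (α.imp ψ)))

-- α′ : the unique consistent member of C_{h,n} provably implied by α.
open Classical in
noncomputable def prime (Ax : Set Formula) (h n : ℕ) (α : Formula) : Formula :=
  if hx : ∃ α', α' ∈ C h n ∧ FmlConsistent Ax α' ∧ Prv Ax (α.imp α') then hx.choose
  else Formula.bot

/-- α →m β iff ⊢ α → ◇β′ and every ξ ∈ C_{h,n} with ⊢ β → ◇ξ satisfies ⊢ α → ◇ξ. -/
def relM (Ax : Set Formula) (h n : ℕ) (α β : Formula) : Prop :=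
  Prv Ax (α.imp (prime Ax h n β).dia) ∧
  ∀ ξ ∈ C h n, Prv Ax (β.imp ξ.dia) → Prv Ax (α.imp ξ.dia)

/-- α →d β (for GL) iff α →m β and some γ ∈ C_{h,n} has ⊢ α → ◇γ and ⊢ β → □¬γ. -/
def relD (h n : ℕ) (α β : Formula) : Prop :=
  relM GLAx h n α β ∧
  ∃ γ ∈ C h n, Prv GLAx (α.imp γ.dia) ∧ Prv GLAx (β.imp γ.neg.box)


/-! ### Auxiliary development for the existence lemma -/

section Aux

variable {Ax : Set Formula}

/-- Boolean evaluation treating variables, constants and boxed formulas as atoms. -/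
def eval (v : Formula → Bool) : Formula → Bool
  | .bot => false
  | .imp a b => !(eval v a) || eval v b
  | a => v a

/-- Propositional tautology (over pseudo-atoms). -/
def Taut (φ : Formula) : Prop := ∀ v : Formula → Bool, eval v φ = true

@[simp] lemma eval_bot (v) : eval v Formula.bot = false := rfl
@[simp] lemma eval_imp (v a b) : eval v (Formula.imp a b) = (!(eval v a) || eval v b) := rfl
@[simp] lemma eval_var (v k) : eval v (Formula.var k) = v (Formula.var k) := rfl
@[simp] lemma eval_const (v k) : eval v (Formula.const k) = v (Formula.const k) := rfl
@[simp] lemma eval_box (v a) : eval v (Formula.box a) = v (Formula.box a) := rfl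
@[simp] lemma eval_neg (v a) : eval v a.neg = !(eval v a) := by simp [Formula.neg]
@[simp] lemma eval_and (v a b) : eval v (a.and b) = (eval v a && eval v b) := by
  simp only [Formula.and, eval_neg, eval_imp, eval_bot]
  cases eval v a <;> cases eval v b <;> rfl
@[simp] lemma eval_or (v a b) : eval v (a.or b) = (eval v a || eval v b) := by
  simp [Formula.or]
@[simp] lemma eval_top (v) : eval v Formula.top = true := by simp [Formula.top]

/-- Pseudo-atoms of a formula. -/
def atoms : Formula → List Formula
  | .imp a b => atoms a ++ atoms b
  | .bot => []
  | a => [a]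

lemma atoms_atomic : ∀ φ, ∀ a ∈ atoms φ, ∀ v, eval v a = v a := by
  intro φ
  induction φ with
  | var k => intro a ha v; simp [atoms] at ha; subst ha; rfl
  | const k => intro a ha v; simp [atoms] at ha; subst ha; rfl
  | bot => intro a ha; simp [atoms] at ha
  | imp x y ihx ihy =>
    intro a ha v
    simp [atoms] at ha
    rcases ha with h | h
    · exact ihx a h v
    · exact ihy a h v
  | box x ih => intro a ha v; simp [atoms] at ha; subst ha; rfl

/-- Derivations from a list of hypotheses. -/
inductive Der (Ax : Set Formula) : List Formula → Formula → Prop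
  | hyp {Γ φ} : φ ∈ Γ → Der Ax Γ φ
  | thm {Γ φ} : Prv Ax φ → Der Ax Γ φ
  | mp {Γ φ ψ} : Der Ax Γ (φ.imp ψ) → Der Ax Γ φ → Der Ax Γ ψ

lemma prv_ax1 (A B : Formula) : Prv Ax (A.imp (B.imp A)) := by
  have := Prv.subst (Ax := Ax) (fun k => if k = 0 then A else B) Prv.ax1
  simpa [Formula.subst, pv, qv] using this

lemma prv_ax2 (A B C : Formula) :
    Prv Ax ((A.imp (B.imp C)).imp ((A.imp B).imp (A.imp C))) := by
  have := Prv.subst (Ax := Ax) (fun k => if k = 0 then A else if k = 1 then B else C) Prv.ax2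
  simpa [Formula.subst, pv, qv, rv] using this

lemma prv_ax3 (A B : Formula) : Prv Ax ((A.neg.imp B.neg).imp (B.imp A)) := by
  have := Prv.subst (Ax := Ax) (fun k => if k = 0 then A else B) Prv.ax3
  simpa [Formula.subst, pv, qv, Formula.neg] using this

lemma prv_K (A B : Formula) : Prv Ax ((A.imp B).box.imp (A.box.imp B.box)) := by
  have := Prv.subst (Ax := Ax) (fun k => if k = 0 then A else B) Prv.axK
  simpa [Formula.subst, pv, qv] using this

lemma prv_id (A : Formula) : Prv Ax (A.imp A) :=
  (prv_ax2 A (A.imp A) A).mp (prv_ax1 A (A.imp A)) |>.mp (prv_ax1 A A)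

lemma der_weaken {Γ Γ' : List Formula} {φ} (h : Der Ax Γ φ) (hs : ∀ x ∈ Γ, x ∈ Γ') :
    Der Ax Γ' φ := by
  induction h with
  | hyp h => exact Der.hyp (hs _ h)
  | thm h => exact Der.thm h
  | mp _ _ ih1 ih2 => exact Der.mp ih1 ih2

lemma der_ded' : ∀ {Γ : List Formula} {B : Formula}, Der Ax Γ B →
    ∀ (A : Formula) (Γ' : List Formula), (∀ x ∈ Γ, x = A ∨ x ∈ Γ') →
    Der Ax Γ' (A.imp B) := by
  intro Γ B h
  induction h with
  | hyp hm =>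
    intro A Γ' hs
    rcases hs _ hm with rfl | hx
    · exact Der.thm (prv_id _)
    · exact Der.mp (Der.thm (prv_ax1 _ _)) (Der.hyp hx)
  | thm h => intro A Γ' hs; exact Der.mp (Der.thm (prv_ax1 _ _)) (Der.thm h)
  | mp _ _ ih1 ih2 =>
    intro A Γ' hs
    exact Der.mp (Der.mp (Der.thm (prv_ax2 _ _ _)) (ih1 A Γ' hs)) (ih2 A Γ' hs)

/-- Deduction theorem. -/
lemma der_ded {Γ : List Formula} {A B : Formula} (h : Der Ax (A :: Γ) B) :
    Der Ax Γ (A.imp B) :=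
  der_ded' h A Γ (fun x hx => List.mem_cons.1 hx)

lemma prv_of_der_nil {φ} (h : Der Ax [] φ) : Prv Ax φ := by
  induction h with
  | hyp h => simp at h
  | thm h => exact h
  | mp _ _ ih1 ih2 => exact ih1.mp ih2

lemma prv_contrap (A B : Formula) : Prv Ax ((A.imp B).imp (B.neg.imp A.neg)) := by
  apply prv_of_der_nil
  apply der_ded; apply der_ded; apply der_ded
  -- Der [A, B.neg, A.imp B] ⊥
  have h1 : Der Ax [A, B.neg, A.imp B] (A.imp B) := Der.hyp (by simp)
  have h2 : Der Ax [A, B.neg, A.imp B] A := Der.hyp (by simp)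
  have h3 : Der Ax [A, B.neg, A.imp B] (B.imp Formula.bot) := Der.hyp (by simp [Formula.neg])
  exact Der.mp h3 (Der.mp h1 h2)

lemma prv_imp_trans' (A B C : Formula) :
    Prv Ax ((A.imp B).imp ((B.imp C).imp (A.imp C))) := by
  apply prv_of_der_nil
  apply der_ded; apply der_ded; apply der_ded
  -- Der [A, B.imp C, A.imp B] C
  have h1 : Der Ax [A, B.imp C, A.imp B] (A.imp B) := Der.hyp (by simp)
  have h2 : Der Ax [A, B.imp C, A.imp B] A := Der.hyp (by simp)
  have h3 : Der Ax [A, B.imp C, A.imp B] (B.imp C) := Der.hyp (by simp)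
  exact Der.mp h3 (Der.mp h1 h2)

lemma prv_imp_trans {A B C : Formula} (h1 : Prv Ax (A.imp B)) (h2 : Prv Ax (B.imp C)) :
    Prv Ax (A.imp C) := ((prv_imp_trans' A B C).mp h1).mp h2

lemma prv_dn1 (A : Formula) : Prv Ax (A.imp A.neg.neg) := by
  apply prv_of_der_nil
  apply der_ded; apply der_ded
  have h1 : Der Ax [A.neg, A] (A.imp Formula.bot) := Der.hyp (by simp [Formula.neg])
  have h2 : Der Ax [A.neg, A] A := Der.hyp (by simp)
  exact Der.mp h1 h2

lemma prv_dne (A : Formula) : Prv Ax (A.neg.neg.imp A) :=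
  (prv_ax3 A A.neg.neg).mp (prv_dn1 A.neg)

lemma prv_nn (A : Formula) : Prv Ax ((A.neg.imp A).imp A) := by
  apply prv_of_der_nil
  apply der_ded
  -- Der [A.neg.imp A] A
  have hnn : Der Ax [A.neg.imp A] A.neg.neg := by
    apply der_ded
    have h1 : Der Ax [A.neg, A.neg.imp A] (A.neg.imp A) := Der.hyp (by simp)
    have h2 : Der Ax [A.neg, A.neg.imp A] (A.imp Formula.bot) := Der.hyp (by simp [Formula.neg])
    exact Der.mp h2 (Der.mp h1 h2)
  exact Der.mp (Der.thm (prv_dne A)) hnn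

lemma prv_cases' (A C : Formula) : Prv Ax ((A.imp C).imp ((A.neg.imp C).imp C)) := by
  apply prv_of_der_nil
  apply der_ded; apply der_ded
  -- Der [A.neg.imp C, A.imp C] C
  have hac : Der Ax [A.neg.imp C, A.imp C] (A.imp C) := Der.hyp (by simp)
  have hnac : Der Ax [A.neg.imp C, A.imp C] (A.neg.imp C) := Der.hyp (by simp)
  have d1 : Der Ax [A.neg.imp C, A.imp C] (C.neg.imp A.neg) :=
    Der.mp (Der.thm (prv_contrap A C)) hac
  have d2 : Der Ax [A.neg.imp C, A.imp C] (C.neg.imp C) :=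
    Der.mp (Der.mp (Der.thm (prv_imp_trans' C.neg A.neg C)) d1) hnac
  exact Der.mp (Der.thm (prv_nn C)) d2

lemma der_cases {Γ : List Formula} {A C : Formula}
    (h1 : Der Ax (A :: Γ) C) (h2 : Der Ax (A.neg :: Γ) C) : Der Ax Γ C :=
  Der.mp (Der.mp (Der.thm (prv_cases' A C)) (der_ded h1)) (der_ded h2)

/-- Signed formula relative to a valuation. -/
def sgn (v : Formula → Bool) (φ : Formula) : Formula :=
  if eval v φ = true then φ else φ.neg

lemma prv_neg_imp (A B : Formula) : Prv Ax (A.neg.imp (A.imp B)) := by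
  apply prv_of_der_nil
  apply der_ded; apply der_ded
  -- Der [A, A.neg] B
  have hbb : Der Ax [A, A.neg] B.neg.neg := by
    apply der_ded
    have h1 : Der Ax [B.neg, A, A.neg] (A.imp Formula.bot) := Der.hyp (by simp [Formula.neg])
    have h2 : Der Ax [B.neg, A, A.neg] A := Der.hyp (by simp)
    exact Der.mp h1 h2
  exact Der.mp (Der.thm (prv_dne B)) hbb

lemma prv_imp_neg_intro (A B : Formula) :
    Prv Ax (A.imp (B.neg.imp (A.imp B).neg)) := by
  apply prv_of_der_nil
  apply der_ded; apply der_ded; apply der_ded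
  -- Der [A.imp B, B.neg, A] ⊥
  have h1 : Der Ax [A.imp B, B.neg, A] (A.imp B) := Der.hyp (by simp)
  have h2 : Der Ax [A.imp B, B.neg, A] A := Der.hyp (by simp)
  have h3 : Der Ax [A.imp B, B.neg, A] (B.imp Formula.bot) := Der.hyp (by simp [Formula.neg])
  exact Der.mp h3 (Der.mp h1 h2)

lemma kalmar (v : Formula → Bool) :
    ∀ (φ : Formula) (Γ : List Formula), (∀ a ∈ atoms φ, sgn v a ∈ Γ) →
      Der Ax Γ (sgn v φ) := by
  intro φ
  induction φ with
  | var k => intro Γ h; exact Der.hyp (h _ (by simp [atoms]))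
  | const k => intro Γ h; exact Der.hyp (h _ (by simp [atoms]))
  | box a ih => intro Γ h; exact Der.hyp (h _ (by simp [atoms]))
  | bot => intro Γ h; simp only [sgn, eval_bot]; exact Der.thm (prv_id _)
  | imp a b iha ihb =>
    intro Γ h
    have ha : Der Ax Γ (sgn v a) := iha Γ (fun x hx => h x (by simp [atoms, hx]))
    have hb : Der Ax Γ (sgn v b) := ihb Γ (fun x hx => h x (by simp [atoms, hx]))
    cases hA : eval v a with
    | false =>
      have : sgn v (a.imp b) = a.imp b := by simp [sgn, hA]
      rw [this]
      rw [show sgn v a = a.neg by simp [sgn, hA]] at ha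
      exact Der.mp (Der.thm (prv_neg_imp a b)) ha
    | true =>
      rw [show sgn v a = a by simp [sgn, hA]] at ha
      cases hB : eval v b with
      | true =>
        have : sgn v (a.imp b) = a.imp b := by simp [sgn, hA, hB]
        rw [this]
        rw [show sgn v b = b by simp [sgn, hB]] at hb
        exact Der.mp (Der.thm (prv_ax1 b a)) hb
      | false =>
        have : sgn v (a.imp b) = (a.imp b).neg := by simp [sgn, hA, hB]
        rw [this]
        rw [show sgn v b = b.neg by simp [sgn, hB]] at hb
        exact Der.mp (Der.mp (Der.thm (prv_imp_neg_intro a b)) ha) hb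

lemma elim_atoms {φ : Formula} :
    ∀ l : List Formula, l.Nodup → (∀ a ∈ l, ∀ v, eval v a = v a) →
      (∀ v : Formula → Bool, Der Ax (l.map (sgn v)) φ) → Prv Ax φ := by
  intro l
  induction l with
  | nil => intro _ _ H; exact prv_of_der_nil (H (fun _ => true))
  | cons a l ih =>
    intro hnd hat H
    obtain ⟨hal, hnd'⟩ := List.nodup_cons.1 hnd
    apply ih hnd' (fun x hx => hat x (List.mem_cons_of_mem _ hx))
    intro v
    have key : ∀ (bv : Bool), (l.map (sgn (fun x => if x = a then bv else v x))) = l.map (sgn v) := by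
      intro bv
      apply List.map_congr_left
      intro x hx
      have hx_at : ∀ w, eval w x = w x := hat x (List.mem_cons_of_mem _ hx)
      have hne : x ≠ a := fun hxa => hal (hxa ▸ hx)
      simp [sgn, hx_at, hne]
    have ha_at : ∀ w, eval w a = w a := hat a List.mem_cons_self
    have Ht := H (fun x => if x = a then true else v x)
    have Hf := H (fun x => if x = a then false else v x)
    rw [List.map_cons, key true] at Ht
    rw [List.map_cons, key false] at Hf
    rw [show sgn (fun x => if x = a then true else v x) a = a by simp [sgn, ha_at]] at Ht
    rw [show sgn (fun x => if x = a then false else v x) a = a.neg by simp [sgn, ha_at]] at Hf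
    exact der_cases Ht Hf

/-- Completeness for propositional tautologies. -/
lemma prv_taut {φ : Formula} (h : Taut φ) : Prv Ax φ := by
  apply elim_atoms (φ := φ) (atoms φ).dedup (List.nodup_dedup _)
    (fun a ha => atoms_atomic φ a (List.mem_dedup.1 ha))
  intro v
  have := kalmar (Ax := Ax) v φ ((atoms φ).dedup.map (sgn v))
    (fun a ha => List.mem_map_of_mem (f := sgn v) (List.mem_dedup.2 ha))
  rwa [show sgn v φ = φ by simp [sgn, h v]] at this

end Aux
section Aux2

variable {Ax : Set Formula} {A B X Y ψ : Formula} {l : List Formula}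

lemma prv_mp2 {C : Formula} (h : Prv Ax (A.imp (B.imp C))) (h1 : Prv Ax A) (h2 : Prv Ax B) :
    Prv Ax C := (h.mp h1).mp h2

lemma prv_and_left (A B : Formula) : Prv Ax ((A.and B).imp A) :=
  prv_taut (by intro v; cases hA : eval v A <;> cases hB : eval v B <;> simp [hA, hB])

lemma prv_and_right (A B : Formula) : Prv Ax ((A.and B).imp B) :=
  prv_taut (by intro v; cases hA : eval v A <;> cases hB : eval v B <;> simp [hA, hB])

lemma prv_imp_and {C : Formula} (h1 : Prv Ax (A.imp B)) (h2 : Prv Ax (A.imp C)) :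
    Prv Ax (A.imp (B.and C)) := by
  refine prv_mp2 (prv_taut ?_) h1 h2
  intro v
  cases hA : eval v A <;> cases hB : eval v B <;> cases hC : eval v C <;> simp [hA, hB, hC]

lemma prv_and_intro (h1 : Prv Ax A) (h2 : Prv Ax B) : Prv Ax (A.and B) := by
  refine prv_mp2 (prv_taut ?_) h1 h2
  intro v
  cases hA : eval v A <;> cases hB : eval v B <;> simp [hA, hB]

lemma prv_or_inl (A B : Formula) : Prv Ax (A.imp (A.or B)) :=
  prv_taut (by intro v; cases hA : eval v A <;> cases hB : eval v B <;> simp [hA, hB])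

lemma prv_or_inr (A B : Formula) : Prv Ax (B.imp (A.or B)) :=
  prv_taut (by intro v; cases hA : eval v A <;> cases hB : eval v B <;> simp [hA, hB])

lemma prv_or_elim {C : Formula} (h1 : Prv Ax (A.imp C)) (h2 : Prv Ax (B.imp C)) :
    Prv Ax ((A.or B).imp C) := by
  refine prv_mp2 (prv_taut ?_) h1 h2
  intro v
  cases hA : eval v A <;> cases hB : eval v B <;> cases hC : eval v C <;> simp [hA, hB, hC]

lemma prv_bot_elim' (A : Formula) : Prv Ax (Formula.bot.imp A) :=
  prv_taut (by intro v; simp)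

lemma prv_top' : Prv Ax Formula.top := prv_taut (by intro v; simp)

lemma prv_weaken (h : Prv Ax B) : Prv Ax (A.imp B) := (prv_ax1 B A).mp h

/-! listConj lemmas -/

lemma listConj_cons_head (a : Formula) (l : List Formula) :
    Prv Ax ((listConj (a :: l)).imp a) := by
  cases l with
  | nil => exact prv_id a
  | cons b l => exact prv_and_left _ _

lemma listConj_cons_tail (a : Formula) (l : List Formula) :
    Prv Ax ((listConj (a :: l)).imp (listConj l)) := by
  cases l with
  | nil => exact prv_weaken prv_top'
  | cons b l => exact prv_and_right _ _

lemma listConj_cons_intro (a : Formula) (l : List Formula) :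
    Prv Ax (a.imp ((listConj l).imp (listConj (a :: l)))) := by
  cases l with
  | nil => exact prv_taut (by intro v; cases hA : eval v a <;> simp [listConj, hA])
  | cons b l =>
    refine prv_taut ?_
    intro v
    cases hA : eval v a <;> cases hX : eval v (listConj (b :: l)) <;>
      simp [listConj, hA, hX]

lemma listConj_imp_mem (hm : ψ ∈ l) : Prv Ax ((listConj l).imp ψ) := by
  induction l with
  | nil => simp at hm
  | cons a l ih =>
    rcases List.mem_cons.1 hm with rfl | hm'
    · exact listConj_cons_head _ _
    · exact prv_imp_trans (listConj_cons_tail _ _) (ih hm')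

lemma imp_listConj (H : ∀ ψ ∈ l, Prv Ax (A.imp ψ)) : Prv Ax (A.imp (listConj l)) := by
  induction l with
  | nil => exact prv_weaken prv_top'
  | cons a l ih =>
    have hA := H a List.mem_cons_self
    have hT := ih (fun x hx => H x (List.mem_cons_of_mem _ hx))
    have h1 : Prv Ax (A.imp ((listConj l).imp (listConj (a :: l)))) :=
      prv_imp_trans hA (listConj_cons_intro a l)
    exact prv_mp2 (prv_ax2 A (listConj l) (listConj (a :: l))) h1 hT

lemma listConj_map_mono {f g : Formula → Formula}
    (H : ∀ x ∈ l, Prv Ax ((f x).imp (g x))) :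
    Prv Ax ((listConj (l.map f)).imp (listConj (l.map g))) := by
  apply imp_listConj
  intro ψ hψ
  obtain ⟨x, hx, rfl⟩ := List.mem_map.1 hψ
  exact prv_imp_trans (listConj_imp_mem (List.mem_map_of_mem (f := f) hx)) (H x hx)

/-! listDisj lemmas -/

lemma listDisj_cons_head (a : Formula) (l : List Formula) :
    Prv Ax (a.imp (listDisj (a :: l))) := by
  cases l with
  | nil => exact prv_id a
  | cons b l => exact prv_or_inl _ _

lemma listDisj_cons_tail (a : Formula) (l : List Formula) :
    Prv Ax ((listDisj l).imp (listDisj (a :: l))) := by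
  cases l with
  | nil => exact prv_bot_elim' a
  | cons b l => exact prv_or_inr _ _

lemma mem_imp_listDisj (hm : ψ ∈ l) : Prv Ax (ψ.imp (listDisj l)) := by
  induction l with
  | nil => simp at hm
  | cons a l ih =>
    rcases List.mem_cons.1 hm with rfl | hm'
    · exact listDisj_cons_head _ _
    · exact prv_imp_trans (ih hm') (listDisj_cons_tail _ _)

lemma listDisj_imp (H : ∀ ψ ∈ l, Prv Ax (ψ.imp A)) : Prv Ax ((listDisj l).imp A) := by
  induction l with
  | nil => exact prv_bot_elim' A
  | cons a l ih =>
    have hA := H a List.mem_cons_self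
    have hT := ih (fun x hx => H x (List.mem_cons_of_mem _ hx))
    cases l with
    | nil => exact hA
    | cons b l' => exact prv_or_elim hA hT

lemma and_listDisj (A : Formula) (l : List Formula) :
    Prv Ax ((A.and (listDisj l)).imp (listDisj (l.map (A.and ·)))) := by
  induction l with
  | nil => exact prv_and_right _ _
  | cons a l ih =>
    cases l with
    | nil => exact prv_id _
    | cons b l' =>
      refine (prv_taut ?_).mp ih
      intro v
      cases h1 : eval v A <;> cases h2 : eval v a <;>
        cases h3 : eval v (listDisj (b :: l')) <;>
        cases h4 : eval v (listDisj ((b :: l').map (A.and ·))) <;>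
        simp [listDisj, h1, h2, h3, h4]

/-! Modal lemmas -/

lemma box_mono (h : Prv Ax (A.imp B)) : Prv Ax (A.box.imp B.box) :=
  (prv_K A B).mp h.nec

lemma prv_box_and_pair (A B : Formula) :
    Prv Ax ((A.box.and B.box).imp ((A.and B).box)) := by
  have h1 : Prv Ax (A.imp (B.imp (A.and B))) :=
    prv_taut (by intro v; cases hA : eval v A <;> cases hB : eval v B <;> simp [hA, hB])
  have h2 : Prv Ax (A.box.imp ((B.imp (A.and B)).box)) := box_mono h1
  have h4 : Prv Ax (A.box.imp (B.box.imp ((A.and B).box))) :=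
    prv_imp_trans h2 (prv_K B (A.and B))
  refine (prv_taut ?_).mp h4
  intro v
  cases h1 : eval v A.box <;> cases h2 : eval v B.box <;>
    cases h3 : eval v (A.and B).box <;> simp [h1, h2, h3]

lemma dia_mono (h : Prv Ax (A.imp B)) : Prv Ax (A.dia.imp B.dia) := by
  have hc : Prv Ax (B.neg.imp A.neg) := (prv_contrap A B).mp h
  exact (prv_contrap B.neg.box A.neg.box).mp (box_mono hc)

lemma prv_dia_or_pair (A B : Formula) :
    Prv Ax ((A.or B).dia.imp (A.dia.or B.dia)) := by
  have s1 := prv_box_and_pair (Ax := Ax) A.neg B.neg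
  have hT : Prv Ax ((A.neg.and B.neg).imp (A.or B).neg) := by
    refine prv_taut ?_
    intro v
    cases hA : eval v A <;> cases hB : eval v B <;> simp [hA, hB]
  have s3 : Prv Ax ((A.neg.box.and B.neg.box).imp ((A.or B).neg.box)) :=
    prv_imp_trans s1 (box_mono hT)
  refine (prv_taut ?_).mp s3
  intro v
  cases h1 : eval v A.neg.box <;> cases h2 : eval v B.neg.box <;>
    cases h3 : eval v (A.or B).neg.box <;>
    simp [Formula.dia, h1, h2, h3]

lemma prv_dia_bot : Prv Ax (Formula.bot.dia.imp Formula.bot) := by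
  have hb : Prv Ax (Formula.bot.neg.box) := Prv.nec (prv_id _)
  refine (prv_taut ?_).mp hb
  intro v
  cases h1 : eval v (Formula.bot.neg.box) <;> simp [Formula.dia, h1]

lemma dia_listDisj (l : List Formula) :
    Prv Ax ((listDisj l).dia.imp (listDisj (l.map Formula.dia))) := by
  induction l with
  | nil => exact prv_dia_bot
  | cons a l ih =>
    cases l with
    | nil => exact prv_id _
    | cons b l' =>
      have h1 : Prv Ax ((a.or (listDisj (b :: l'))).dia.imp
          (a.dia.or (listDisj (b :: l')).dia)) := prv_dia_or_pair _ _
      have h2 : Prv Ax ((a.dia.or (listDisj (b :: l')).dia).imp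
          (a.dia.or (listDisj ((b :: l').map Formula.dia)))) := by
        refine (prv_taut ?_).mp ih
        intro v
        cases h1 : eval v a.dia <;> cases h2 : eval v (listDisj (b :: l')).dia <;>
          cases h3 : eval v (listDisj ((b :: l').map Formula.dia)) <;> simp [h1, h2, h3]
      exact prv_imp_trans h1 h2

lemma listConj_box (l : List Formula) :
    Prv Ax ((listConj (l.map Formula.box)).imp (listConj l).box) := by
  induction l with
  | nil => exact prv_weaken (Prv.nec prv_top')
  | cons a l ih =>
    cases l with
    | nil => exact prv_id _
    | cons b l' =>
      have h1 : Prv Ax ((a.box.and (listConj ((b :: l').map Formula.box))).imp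
          (a.box.and (listConj (b :: l')).box)) := by
        refine (prv_taut ?_).mp ih
        intro v
        cases h1 : eval v a.box <;> cases h2 : eval v (listConj ((b :: l').map Formula.box)) <;>
          cases h3 : eval v (listConj (b :: l')).box <;> simp [h1, h2, h3]
      exact prv_imp_trans h1 (prv_box_and_pair _ _)

/-! semantic evaluation of list conj/disj -/

lemma eval_listConj {v : Formula → Bool} :
    ∀ l : List Formula, (eval v (listConj l) = true ↔ ∀ ψ ∈ l, eval v ψ = true) := by
  intro l
  induction l with
  | nil => simp [listConj]
  | cons a l ih =>
    cases l with
    | nil => simp [listConj]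
    | cons b l' =>
      rw [show listConj (a :: b :: l') = a.and (listConj (b :: l')) from rfl]
      simp only [eval_and, Bool.and_eq_true, ih, List.mem_cons]
      constructor
      · rintro ⟨h1, h2⟩ ψ hψ
        rcases hψ with rfl | hψ
        · exact h1
        · exact h2 ψ hψ
      · intro h
        exact ⟨h a (Or.inl rfl), fun ψ hψ => h ψ (Or.inr hψ)⟩

lemma eval_listDisj {v : Formula → Bool} :
    ∀ l : List Formula, (eval v (listDisj l) = true ↔ ∃ ψ ∈ l, eval v ψ = true) := by
  intro l
  induction l with
  | nil => simp [listDisj]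
  | cons a l ih =>
    cases l with
    | nil => simp [listDisj]
    | cons b l' =>
      rw [show listDisj (a :: b :: l') = a.or (listDisj (b :: l')) from rfl]
      simp only [eval_or, Bool.or_eq_true, ih, List.mem_cons]
      constructor
      · rintro (h1 | ⟨ψ, hψ, h2⟩)
        · exact ⟨a, Or.inl rfl, h1⟩
        · exact ⟨ψ, Or.inr hψ, h2⟩
      · rintro ⟨ψ, (rfl | hψ), h2⟩
        · exact Or.inl h2
        · exact Or.inr ⟨ψ, hψ, h2⟩

end Aux2
section Aux3

variable {Ax : Set Formula}

lemma atom_var (k : ℕ) : atom (2 * k + 1) = Formula.var k := by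
  have h1 : (2 * k) % 2 = 0 := by omega
  have h2 : (2 * k) / 2 = k := by omega
  simp [atom, h1, h2]

lemma atom_const (k : ℕ) : atom (2 * k + 2) = Formula.const k := by
  have h1 : (2 * k + 1) % 2 = 1 := by omega
  have h2 : (2 * k + 1) / 2 = k := by omega
  simp [atom, h1, h2]

lemma hatT_imp_atom {n : ℕ} {T : List ℕ} {i : ℕ} (hi : i < n + 1) (hT : i ∈ T) :
    Prv Ax ((hatT n T).imp (atom i)) := by
  have hm : atom i ∈ (List.range (n + 1)).map
      (fun i => if i ∈ T then atom i else (atom i).neg) :=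
    List.mem_map.2 ⟨i, List.mem_range.2 hi, by simp [hT]⟩
  exact listConj_imp_mem hm

lemma hatT_imp_natom {n : ℕ} {T : List ℕ} {i : ℕ} (hi : i < n + 1) (hT : i ∉ T) :
    Prv Ax ((hatT n T).imp (atom i).neg) := by
  have hm : (atom i).neg ∈ (List.range (n + 1)).map
      (fun i => if i ∈ T then atom i else (atom i).neg) :=
    List.mem_map.2 ⟨i, List.mem_range.2 hi, by simp [hT]⟩
  exact listConj_imp_mem hm

lemma prv_disj_hatT (n : ℕ) :
    Prv Ax (listDisj ((List.range (n + 1)).sublists.map (hatT n))) := by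
  apply prv_taut
  intro v
  rw [eval_listDisj]
  refine ⟨hatT n ((List.range (n + 1)).filter (fun i => eval v (atom i))), ?_, ?_⟩
  · exact List.mem_map.2 ⟨_, List.mem_sublists.2 List.filter_sublist, rfl⟩
  · rw [show hatT n ((List.range (n + 1)).filter (fun i => eval v (atom i))) =
      listConj ((List.range (n + 1)).map (fun i =>
        if i ∈ (List.range (n + 1)).filter (fun i => eval v (atom i)) then atom i
        else (atom i).neg)) from rfl]
    rw [eval_listConj]
    intro ψ hψ
    obtain ⟨i, hi, rfl⟩ := List.mem_map.1 hψ
    by_cases hiT : i ∈ (List.range (n + 1)).filter (fun i => eval v (atom i))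
    · have := (List.mem_filter.1 hiT).2
      simp only [hiT, if_true]
      exact this
    · have hev : eval v (atom i) = false := by
        by_contra hne
        exact hiT (List.mem_filter.2 ⟨hi, by simpa using hne⟩)
      simp [hiT, hev]

lemma prv_exhaustive (Ax : Set Formula) (h n : ℕ) : Prv Ax (listDisj (C h n)) := by
  induction h with
  | zero => exact prv_disj_hatT n
  | succ h ih =>
    classical
    set L := C h n with hL
    have hBox : Prv Ax ((listDisj L).box) := ih.nec
    set Sl := L.sublists.map (fun S => (listConj (S.map Formula.dia)).and
        (listConj ((L.filter (fun ψ => ψ ∉ S)).map (fun ψ => ψ.dia.neg)))) with hSl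
    have hσ : Prv Ax (listDisj Sl) := by
      apply prv_taut
      intro v
      rw [eval_listDisj]
      set Sv := L.filter (fun ψ => eval v ψ.dia) with hSv
      refine ⟨_, List.mem_map.2 ⟨Sv, List.mem_sublists.2 List.filter_sublist, rfl⟩, ?_⟩
      rw [eval_and, Bool.and_eq_true, eval_listConj, eval_listConj]
      constructor
      · intro ψ hψ
        obtain ⟨x, hx, rfl⟩ := List.mem_map.1 hψ
        exact (List.mem_filter.1 hx).2
      · intro ψ hψ
        obtain ⟨x, hx, rfl⟩ := List.mem_map.1 hψ
        have hx2 := List.mem_filter.1 hx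
        have : eval v x.dia = false := by
          by_contra hne
          have : x ∈ Sv := List.mem_filter.2 ⟨hx2.1, by simpa using hne⟩
          simp [this] at hx2
        simp [this]
    refine (listDisj_imp ?_).mp hσ
    intro d hd
    obtain ⟨S, hSmem, rfl⟩ := List.mem_map.1 hd
    set X := listConj (S.map Formula.dia) with hX
    set F := L.filter (fun ψ => ψ ∉ S) with hF
    set Yc := listConj (F.map (fun ψ => ψ.dia.neg)) with hYc
    -- Yc implies box of disj S (together with hBox)
    have m1 : Prv Ax (Yc.imp (listConj (F.map (fun ψ => ψ.neg.box)))) :=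
      listConj_map_mono (fun ψ _ => prv_dne ψ.neg.box)
    have meq : F.map (fun ψ => ψ.neg.box) = (F.map Formula.neg).map Formula.box := by
      simp [List.map_map, Function.comp]
    have m2 : Prv Ax (Yc.imp ((listConj (F.map Formula.neg)).box)) := by
      rw [meq] at m1
      exact prv_imp_trans m1 (listConj_box _)
    have c3 : Prv Ax (Yc.imp (((listDisj L).and (listConj (F.map Formula.neg))).box)) :=
      prv_imp_trans (prv_imp_and (prv_weaken hBox) m2) (prv_box_and_pair _ _)
    have tautF : Prv Ax (((listDisj L).and (listConj (F.map Formula.neg))).imp (listDisj S)) := by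
      apply prv_taut
      intro v
      rw [eval_imp]
      cases hc : eval v ((listDisj L).and (listConj (F.map Formula.neg))) with
      | false => simp
      | true =>
        rw [eval_and, Bool.and_eq_true] at hc
        obtain ⟨h1, h2⟩ := hc
        rw [eval_listDisj] at h1
        obtain ⟨ψ₀, hψ₀L, hψ₀⟩ := h1
        have hψ₀S : ψ₀ ∈ S := by
          by_contra hnS
          have hmF : ψ₀ ∈ F := List.mem_filter.2 ⟨hψ₀L, by simpa using hnS⟩
          have := (eval_listConj _).1 h2 ψ₀.neg (List.mem_map_of_mem (f := Formula.neg) hmF)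
          rw [eval_neg, hψ₀] at this
          simp at this
        have : eval v (listDisj S) = true := (eval_listDisj _).2 ⟨ψ₀, hψ₀S, hψ₀⟩
        simp [this]
    have c4 : Prv Ax (Yc.imp ((listDisj S).box)) := prv_imp_trans c3 (box_mono tautF)
    -- now distribute over the hatT disjunction
    set d := X.and Yc with hd'
    have hτ := prv_disj_hatT (Ax := Ax) n
    set Ts := (List.range (n + 1)).sublists.map (hatT n) with hTs
    have step1 : Prv Ax (d.imp (d.and (listDisj Ts))) :=
      prv_imp_and (prv_id d) (prv_weaken hτ)
    have step2 : Prv Ax ((d.and (listDisj Ts)).imp (listDisj (Ts.map (d.and ·)))) :=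
      and_listDisj d Ts
    have step3 : Prv Ax ((listDisj (Ts.map (d.and ·))).imp (listDisj (C (h + 1) n))) := by
      apply listDisj_imp
      intro x hx
      obtain ⟨t, ht, rfl⟩ := List.mem_map.1 hx
      obtain ⟨T, hT, rfl⟩ := List.mem_map.1 ht
      have hmem : canonAlpha n S T ∈ C (h + 1) n := by
        rw [show C (h + 1) n = (C h n).sublists.flatMap
          (fun S => (List.range (n+1)).sublists.map (fun T => canonAlpha n S T)) from rfl]
        exact List.mem_flatMap.2 ⟨S, hSmem, List.mem_map.2 ⟨T, hT, rfl⟩⟩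
      have e0 : Prv Ax ((d.and (hatT n T)).imp d) := prv_and_left _ _
      have e1 : Prv Ax ((d.and (hatT n T)).imp X) := prv_imp_trans e0 (prv_and_left _ _)
      have e2 : Prv Ax ((d.and (hatT n T)).imp ((listDisj S).box)) :=
        prv_imp_trans e0 (prv_imp_trans (prv_and_right _ _) c4)
      have e3 : Prv Ax ((d.and (hatT n T)).imp (hatT n T)) := prv_and_right _ _
      have eα : Prv Ax ((d.and (hatT n T)).imp (canonAlpha n S T)) :=
        prv_imp_and e1 (prv_imp_and e2 e3)
      exact prv_imp_trans eα (mem_imp_listDisj hmem)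
    exact prv_imp_trans step1 (prv_imp_trans step2 step3)

lemma C_imp_hatT {h n : ℕ} {α : Formula} (hα : α ∈ C h n) :
    ∃ T : List ℕ, Prv Ax (α.imp (hatT n T)) := by
  cases h with
  | zero =>
    obtain ⟨T, _, rfl⟩ := List.mem_map.1 hα
    exact ⟨T, prv_id _⟩
  | succ h =>
    rw [show C (h + 1) n = (C h n).sublists.flatMap
      (fun S => (List.range (n+1)).sublists.map (fun T => canonAlpha n S T)) from rfl] at hα
    obtain ⟨S, hS, hα2⟩ := List.mem_flatMap.1 hα
    obtain ⟨T, hT, rfl⟩ := List.mem_map.1 hα2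
    exact ⟨T, prv_imp_trans (prv_and_right _ _) (prv_and_right _ _)⟩

lemma prv_det_aux {n H : ℕ} {α : Formula}
    (hatom : ∃ T : List ℕ, Prv Ax (α.imp (hatT n T)))
    (hbox : ∀ χ : Formula, ht χ + 1 ≤ H → ord χ ≤ n →
      Prv Ax (α.imp χ.box) ∨ Prv Ax (α.imp χ.box.neg)) :
    ∀ φ : Formula, ht φ ≤ H → ord φ ≤ n →
      Prv Ax (α.imp φ) ∨ Prv Ax (α.imp φ.neg) := by
  intro φ
  induction φ with
  | var k =>
    intro _ hord
    obtain ⟨T, hT⟩ := hatom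
    have hk : 2 * k + 1 < n + 1 := by
      have : ord (Formula.var k) = 2 * k + 1 := rfl
      omega
    by_cases hmem : 2 * k + 1 ∈ T
    · left
      have := hatT_imp_atom (Ax := Ax) hk hmem
      rw [atom_var] at this
      exact prv_imp_trans hT this
    · right
      have := hatT_imp_natom (Ax := Ax) hk hmem
      rw [atom_var] at this
      exact prv_imp_trans hT this
  | const k =>
    intro _ hord
    obtain ⟨T, hT⟩ := hatom
    have hk : 2 * k + 2 < n + 1 := by
      have : ord (Formula.const k) = 2 * k + 2 := rfl
      omega
    by_cases hmem : 2 * k + 2 ∈ T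
    · left
      have := hatT_imp_atom (Ax := Ax) hk hmem
      rw [atom_const] at this
      exact prv_imp_trans hT this
    · right
      have := hatT_imp_natom (Ax := Ax) hk hmem
      rw [atom_const] at this
      exact prv_imp_trans hT this
  | bot => intro _ _; right; exact prv_weaken (prv_id _)
  | imp a b iha ihb =>
    intro hht hord
    have hhta : ht a ≤ H := by have : ht (a.imp b) = max (ht a) (ht b) := rfl; omega
    have hhtb : ht b ≤ H := by have : ht (a.imp b) = max (ht a) (ht b) := rfl; omega
    have horda : ord a ≤ n := by have : ord (a.imp b) = max (ord a) (ord b) := rfl; omega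
    have hordb : ord b ≤ n := by have : ord (a.imp b) = max (ord a) (ord b) := rfl; omega
    rcases ihb hhtb hordb with hb | hnb
    · left
      refine (prv_taut ?_).mp hb
      intro v
      cases h1 : eval v α <;> cases h2 : eval v a <;> cases h3 : eval v b <;> simp [h1, h2, h3]
    · rcases iha hhta horda with ha | hna
      · right
        refine prv_mp2 (prv_taut ?_) ha hnb
        intro v
        cases h1 : eval v α <;> cases h2 : eval v a <;> cases h3 : eval v b <;> simp [h1, h2, h3]
      · left
        refine (prv_taut ?_).mp hna
        intro v
        cases h1 : eval v α <;> cases h2 : eval v a <;> cases h3 : eval v b <;> simp [h1, h2, h3]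
  | box χ ih =>
    intro hht hord
    have h1 : ht χ + 1 ≤ H := by have : ht χ.box = 1 + ht χ := rfl; omega
    have h2 : ord χ ≤ n := hord
    exact hbox χ h1 h2

lemma prv_det (Ax : Set Formula) :
    ∀ (h n : ℕ) (α : Formula), α ∈ C h n →
      ∀ φ : Formula, ht φ ≤ h → ord φ ≤ n →
        Prv Ax (α.imp φ) ∨ Prv Ax (α.imp φ.neg) := by
  intro h
  induction h with
  | zero =>
    intro n α hα
    exact prv_det_aux (C_imp_hatT hα) (fun χ hχ _ => by omega)
  | succ h ih =>
    intro n α hα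
    rw [show C (h + 1) n = (C h n).sublists.flatMap
      (fun S => (List.range (n+1)).sublists.map (fun T => canonAlpha n S T)) from rfl] at hα
    obtain ⟨S, hS, hα2⟩ := List.mem_flatMap.1 hα
    obtain ⟨T, hT, rfl⟩ := List.mem_map.1 hα2
    refine prv_det_aux ⟨T, prv_imp_trans (prv_and_right _ _) (prv_and_right _ _)⟩ ?_
    intro χ hhtχ hordχ
    by_cases hall : ∀ β ∈ S, Prv Ax (β.imp χ)
    · left
      have hd : Prv Ax ((listDisj S).imp χ) := listDisj_imp hall
      have hbs : Prv Ax ((canonAlpha n S T).imp ((listDisj S).box)) :=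
        prv_imp_trans (prv_and_right _ _) (prv_and_left _ _)
      exact prv_imp_trans hbs (box_mono hd)
    · right
      push_neg at hall
      obtain ⟨β, hβS, hnprv⟩ := hall
      have hβC : β ∈ C h n := (List.Sublist.subset (List.mem_sublists.1 hS)) hβS
      have hd := ih n β hβC χ (by omega) hordχ
      have hβχ : Prv Ax (β.imp χ.neg) := hd.resolve_left hnprv
      have a1 : Prv Ax ((canonAlpha n S T).imp β.dia) :=
        prv_imp_trans (prv_and_left _ _)
          (listConj_imp_mem (List.mem_map_of_mem (f := Formula.dia) hβS))
      have a2 : Prv Ax (β.dia.imp χ.neg.dia) := dia_mono hβχ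
      have a3 : Prv Ax (χ.neg.dia.imp χ.box.neg) :=
        (prv_contrap χ.box χ.neg.neg.box).mp (box_mono (prv_dn1 χ))
      exact prv_imp_trans a1 (prv_imp_trans a2 a3)

end Aux3

/-- Existence lemma. If ψ ∧ ◇φ is KΣ-consistent with φ ∈ L_{h,n},
there is α ∈ C_{h,n} with ψ ∧ ◇α consistent and ⊢ α→φ. -/
theorem existence_lemma (Sig : Set ModalAxiom)
    (hSig : Sig ⊆ {ModalAxiom.T, ModalAxiom.B, ModalAxiom.four, ModalAxiom.D})
    (h n : ℕ) (φ ψ : Formula) (hφ : InL h n φ)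
    (hcons : FmlConsistent (KAxioms Sig) (ψ.and φ.dia)) :
    ∃ α ∈ C h n,
      FmlConsistent (KAxioms Sig) (ψ.and α.dia) ∧ Prv (KAxioms Sig) (α.imp φ) := by
  classical
  set Ax := KAxioms Sig with hAx
  obtain ⟨hht, hord⟩ := hφ
  set G := (C h n).filter (fun α => Prv Ax (α.imp φ)) with hG
  have hG1 : Prv Ax (φ.imp (listDisj G)) := by
    have hstep : Prv Ax ((listDisj (C h n)).imp (φ.imp (listDisj G))) := by
      apply listDisj_imp
      intro α hα
      rcases prv_det Ax h n α hα φ hht hord with hp | hn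
      · have hαG : α ∈ G := List.mem_filter.2 ⟨hα, by simpa using hp⟩
        have hm : Prv Ax (α.imp (listDisj G)) := mem_imp_listDisj hαG
        refine (prv_taut ?_).mp hm
        intro v
        cases h1 : eval v α <;> cases h2 : eval v φ <;>
          cases h3 : eval v (listDisj G) <;> simp [h1, h2, h3]
      · refine (prv_taut ?_).mp hn
        intro v
        cases h1 : eval v α <;> cases h2 : eval v φ <;>
          cases h3 : eval v (listDisj G) <;> simp [h1, h2, h3]
    exact hstep.mp (prv_exhaustive Ax h n)
  have hG2 : Prv Ax (φ.dia.imp (listDisj (G.map Formula.dia))) :=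
    prv_imp_trans (dia_mono hG1) (dia_listDisj G)
  by_contra hcon
  push_neg at hcon
  have hkey : ∀ x ∈ (G.map Formula.dia).map (ψ.and ·), Prv Ax (x.imp Formula.bot) := by
    intro x hx
    obtain ⟨d, hd, rfl⟩ := List.mem_map.1 hx
    obtain ⟨α, hαG, rfl⟩ := List.mem_map.1 hd
    have hαC : α ∈ C h n := (List.mem_filter.1 hαG).1
    have hprv : Prv Ax (α.imp φ) := by
      have := (List.mem_filter.1 hαG).2
      simpa using this
    by_contra hno
    exact hcon α hαC hno hprv
  have c1 : Prv Ax ((ψ.and φ.dia).imp (ψ.and (listDisj (G.map Formula.dia)))) :=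
    prv_imp_and (prv_and_left _ _) (prv_imp_trans (prv_and_right _ _) hG2)
  have c2 : Prv Ax ((ψ.and (listDisj (G.map Formula.dia))).imp
      (listDisj ((G.map Formula.dia).map (ψ.and ·)))) := and_listDisj _ _
  have c3 : Prv Ax ((listDisj ((G.map Formula.dia).map (ψ.and ·))).imp Formula.bot) :=
    listDisj_imp hkey
  exact hcons (prv_imp_trans c1 (prv_imp_trans c2 c3))

end ModalSOA
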